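/- arXiv:2210.01072 — 4 statements merged into one kernel-verified Lean document; each statement's English description precedes it below -/
import Mathlib

section
/- (Theorem 2.2(b)) Let λ ≥ 0. Any minimizer θ ∈ ℝ^{N+1} of the ℓ2-regularized objective R(θ) + λ Σ_{i=1}^N θ_i² satisfies, for every i ∈ {1,…,N}, θ_i = (2/σ) (1 + 4λ/σ²)^{-1} f̂({i}). -/
open Finset

namespace Paper

noncomputable section

/-- Map a Boolean coordinate to its ±1 value. -/
def sgn (b : Bool) : ℝ := if b then 1 else -1

/-- σ = 2√(p(1-p)). -/
def sigma (p : ℝ) : ℝ := 2 * Real.sqrt (p * (1 - p))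

/-- Probability of a point x under the p-biased distribution B_p. -/
def wt (N : ℕ) (p : ℝ) (x : Fin N → Bool) : ℝ :=
  ∏ i, (if x i then p else 1 - p)

/-- Expectation under the p-biased distribution B_p (finite weighted sum). -/
def expect (N : ℕ) (p : ℝ) (g : (Fin N → Bool) → ℝ) : ℝ :=
  ∑ x : Fin N → Bool, wt N p x * g x

/-- The basis function φ_S(x) = ∏_{i∈S} (x_i - μ)/σ with μ = 2p-1. -/
def phi (N : ℕ) (p : ℝ) (S : Finset (Fin N)) (x : Fin N → Bool) : ℝ :=
  ∏ i ∈ S, (sgn (x i) - (2 * p - 1)) / sigma p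

/-- Fourier coefficient f̂(S) = E_{x~B_p}[f(x) φ_S(x)]. -/
def coeff (N : ℕ) (p : ℝ) (f : (Fin N → Bool) → ℝ) (S : Finset (Fin N)) : ℝ :=
  expect N p (fun x => f x * phi N p S x)

/-- Individual influence Inf_i(f) = E_{x~B_p}[f(x|_{i→1}) - f(x|_{i→-1})]. -/
def infl (N : ℕ) (p : ℝ) (f : (Fin N → Bool) → ℝ) (i : Fin N) : ℝ :=
  expect N p (fun x => f (Function.update x i true) - f (Function.update x i false))

/-- x|_{I→-1}: set all coordinates in I to -1. -/
def setNeg (N : ℕ) (I : Finset (Fin N)) (x : Fin N → Bool) : Fin N → Bool :=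
  fun j => if j ∈ I then false else x j

/-- Group influence Inf_I(f) = E_{x~B_p}[f(x) - f(x|_{I→-1})]. -/
def inflSet (N : ℕ) (p : ℝ) (f : (Fin N → Bool) → ℝ) (I : Finset (Fin N)) : ℝ :=
  expect N p (fun x => f x - f (setNeg N I x))

/-- Least-squares objective R(θ) for the linear datamodel (x̄_i = (1+x_i)/2 ∈ {0,1}). -/
def Rres (N : ℕ) (p : ℝ) (f : (Fin N → Bool) → ℝ) (θ : Fin (N + 1) → ℝ) : ℝ :=
  expect N p
    (fun x => (f x - θ 0 - ∑ i : Fin N, θ i.succ * (if x i then (1 : ℝ) else 0)) ^ 2)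

/-- Joint probability of a single coordinate pair (x_i, x'_i) under the ρ-correlated
distribution. -/
def pairWt (p ρ : ℝ) (b b' : Bool) : ℝ :=
  if b then (if b' then p * (1 - (1 - ρ) * (1 - p)) else p * ((1 - ρ) * (1 - p)))
  else (if b' then (1 - p) * ((1 - ρ) * p) else (1 - p) * (1 - (1 - ρ) * p))

/-- Probability of the pair (x, x') under the ρ-correlated distribution B_{p,ρ}. -/
def wtPair (N : ℕ) (p ρ : ℝ) (x x' : Fin N → Bool) : ℝ :=
  ∏ i, pairWt p ρ (x i) (x' i)

/-- Noise stability h(ρ) = E_{(x,x')~B_{p,ρ}}[f(x) f(x')]. -/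
def noiseStab (N : ℕ) (p ρ : ℝ) (f : (Fin N → Bool) → ℝ) : ℝ :=
  ∑ x : Fin N → Bool, ∑ x' : Fin N → Bool, wtPair N p ρ x x' * (f x * f x')

/-- If A t² + B t ≥ 0 for all t (A ≥ 0 unnecessary actually), then B = 0. -/
lemma quad_coeff_zero {A B : ℝ} (h : ∀ t : ℝ, 0 ≤ A * t ^ 2 + B * t) (hA : 0 ≤ A) : B = 0 := by
  have h1 : (0:ℝ) < A + 1 := by linarith
  have ht := h (-B / (A + 1))
  have heq : A * (-B / (A + 1)) ^ 2 + B * (-B / (A + 1)) = -(B ^ 2 / (A + 1) ^ 2) := by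
    field_simp
    ring
  rw [heq] at ht
  have h2 : B ^ 2 / (A + 1) ^ 2 ≤ 0 := by linarith
  have h3 : 0 ≤ B ^ 2 / (A + 1) ^ 2 := div_nonneg (sq_nonneg B) (sq_nonneg _)
  have h4 : B ^ 2 / (A + 1) ^ 2 = 0 := le_antisymm h2 h3
  have h5 : B ^ 2 = 0 := by
    rcases div_eq_zero_iff.mp h4 with h | h
    · exact h
    · exact absurd h (by positivity)
  exact pow_eq_zero_iff (by norm_num) |>.mp h5

/-- Factorization of expectations of products over coordinates. -/
lemma expect_factor (N : ℕ) (p : ℝ) (g : Fin N → Bool → ℝ) :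
    expect N p (fun x => ∏ j, g j (x j)) = ∏ j, (p * g j true + (1 - p) * g j false) := by
  unfold expect wt
  have h1 : ∀ x : Fin N → Bool,
      (∏ j, (if x j then p else 1 - p)) * (∏ j, g j (x j))
        = ∏ j, ((if x j then p else 1 - p) * g j (x j)) := fun x => Finset.prod_mul_distrib.symm
  simp_rw [h1]
  have h2 : ∀ j : Fin N, p * g j true + (1 - p) * g j false
      = ∑ b : Bool, (if b then p else 1 - p) * g j b := by
    intro j; simp [Fintype.sum_bool]
  rw [Finset.prod_congr rfl (fun j _ => h2 j), Fintype.prod_sum]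

lemma expect_smul (N : ℕ) (p a : ℝ) (g : (Fin N → Bool) → ℝ) :
    expect N p (fun x => a * g x) = a * expect N p g := by
  unfold expect; rw [Finset.mul_sum]; exact Finset.sum_congr rfl fun x _ => by ring

lemma expect_add (N : ℕ) (p : ℝ) (g h : (Fin N → Bool) → ℝ) :
    expect N p (fun x => g x + h x) = expect N p g + expect N p h := by
  unfold expect; rw [← Finset.sum_add_distrib]
  exact Finset.sum_congr rfl fun x _ => by ring

lemma expect_sum (N : ℕ) (p : ℝ) {ι : Type*} (s : Finset ι) (g : ι → (Fin N → Bool) → ℝ) :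
    expect N p (fun x => ∑ j ∈ s, g j x) = ∑ j ∈ s, expect N p (g j) := by
  unfold expect
  simp_rw [Finset.mul_sum]
  rw [Finset.sum_comm]

/-- Theorem 2.2(b): any minimizer of the ℓ2-regularized objective satisfies
θ_i = (2/σ)(1 + 4λ/σ²)⁻¹ f̂({i}) for all i ∈ {1,…,N}. -/
theorem stmt_6 (N : ℕ) (p : ℝ) (hp : 0 < p) (hp1 : p < 1)
    (f : (Fin N → Bool) → ℝ) (lam : ℝ) (hlam : 0 ≤ lam) (θ : Fin (N + 1) → ℝ)
    (hmin : ∀ θ' : Fin (N + 1) → ℝ,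
      Rres N p f θ + lam * ∑ i : Fin N, (θ i.succ) ^ 2
        ≤ Rres N p f θ' + lam * ∑ i : Fin N, (θ' i.succ) ^ 2) :
    ∀ i : Fin N,
      θ i.succ = (2 / sigma p) * (1 + 4 * lam / (sigma p) ^ 2)⁻¹ * coeff N p f {i} := by
  intro i
  have hpp : 0 < p * (1 - p) := by nlinarith
  have hσ : 0 < sigma p := by
    unfold sigma
    have := Real.sqrt_pos.mpr hpp
    linarith
  have hσsq : sigma p ^ 2 = 4 * (p * (1 - p)) := by
    unfold sigma
    rw [mul_pow, Real.sq_sqrt hpp.le]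
    ring
  set c : (Fin N → Bool) → ℝ := fun x => (if x i then (1:ℝ) else 0) - p with hc
  set r : (Fin N → Bool) → ℝ :=
    fun x => f x - θ 0 - ∑ j : Fin N, θ j.succ * (if x j then (1:ℝ) else 0) with hr
  -- E[c] = 0
  have hEc : expect N p c = 0 := by
    have h1 : ∀ x : Fin N → Bool,
        c x = ∏ j, (if j = i then ((if x j then (1:ℝ) else 0) - p) else 1) := by
      intro x
      rw [Finset.prod_ite_eq']
      simp [hc]
    have step := expect_factor N p
      (fun j b => if j = i then ((if b then (1:ℝ) else 0) - p) else 1)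
    calc expect N p c
        = expect N p (fun x => ∏ j, (if j = i then ((if x j then (1:ℝ) else 0) - p) else 1)) := by
          exact congrArg _ (funext h1)
      _ = ∏ j, (p * (if j = i then ((if (true:Bool) then (1:ℝ) else 0) - p) else 1)
            + (1 - p) * (if j = i then ((if (false:Bool) then (1:ℝ) else 0) - p) else 1)) := step
      _ = 0 := by
          apply Finset.prod_eq_zero (Finset.mem_univ i)
          simp
          ring
  -- E[X_j * c]
  have hEXc : ∀ j0 : Fin N,
      expect N p (fun x => (if x j0 then (1:ℝ) else 0) * c x)
        = if j0 = i then p * (1 - p) else 0 := by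
    intro j0
    have h1 : ∀ x : Fin N → Bool,
        (if x j0 then (1:ℝ) else 0) * c x
          = ∏ j, ((if j = j0 then (if x j then (1:ℝ) else 0) else 1)
              * (if j = i then ((if x j then (1:ℝ) else 0) - p) else 1)) := by
      intro x
      rw [Finset.prod_mul_distrib, Finset.prod_ite_eq', Finset.prod_ite_eq']
      simp [hc]
    have step := expect_factor N p
      (fun j b => (if j = j0 then (if b then (1:ℝ) else 0) else 1)
        * (if j = i then ((if b then (1:ℝ) else 0) - p) else 1))
    rw [show (fun x => (if x j0 then (1:ℝ) else 0) * c x) = _ from funext h1, step]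
    by_cases hji : j0 = i
    · subst hji
      rw [Finset.prod_eq_single j0]
      · simp
      · intro j _ hj; simp [hj]
      · intro h; exact absurd (Finset.mem_univ j0) h
    · rw [if_neg hji]
      apply Finset.prod_eq_zero (Finset.mem_univ i)
      simp [Ne.symm hji]
      ring
  -- E[f c] = (σ/2) * coeff {i}
  have hcphi : ∀ x, c x = (sigma p / 2) * phi N p {i} x := by
    intro x
    unfold phi sgn
    rw [Finset.prod_singleton]
    cases h : x i <;> simp [hc, h] <;> field_simp <;> try ring
  have hEfc : expect N p (fun x => f x * c x) = (sigma p / 2) * coeff N p f {i} := by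
    have : (fun x => f x * c x) = fun x => (sigma p / 2) * (f x * phi N p {i} x) := by
      funext x; rw [hcphi x]; ring
    rw [this, expect_smul]
    rfl
  -- wt nonneg, hence E[c²] ≥ 0
  have hwt : ∀ x : Fin N → Bool, 0 ≤ wt N p x := by
    intro x
    apply Finset.prod_nonneg
    intro j _
    cases x j <;> simp <;> linarith
  have hEc2 : 0 ≤ expect N p (fun x => c x ^ 2) :=
    Finset.sum_nonneg fun x _ => mul_nonneg (hwt x) (sq_nonneg _)
  -- linearity: E[r c]
  have hErc : expect N p (fun x => r x * c x)
      = expect N p (fun x => f x * c x) + ((- θ 0) * expect N p c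
        + ∑ j : Fin N, (- θ j.succ)
            * expect N p (fun x => (if x j then (1:ℝ) else 0) * c x)) := by
    have h1 : (fun x => r x * c x)
        = fun x => f x * c x + ((- θ 0) * c x
            + ∑ j : Fin N, (- θ j.succ) * ((if x j then (1:ℝ) else 0) * c x)) := by
      funext x
      simp only [hr]
      rw [sub_mul, sub_mul, Finset.sum_mul]
      have : ∀ j : Fin N, (θ j.succ * (if x j then (1:ℝ) else 0)) * c x
          = -((- θ j.succ) * ((if x j then (1:ℝ) else 0) * c x)) := fun j => by ring
      rw [Finset.sum_congr rfl fun j _ => this j, Finset.sum_neg_distrib]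
      ring
    rw [h1, expect_add, expect_add, expect_smul, expect_sum]
    congr 2
    exact Finset.sum_congr rfl fun j _ => (expect_smul N p _ _)
  have hErc' : expect N p (fun x => r x * c x)
      = sigma p / 2 * coeff N p f {i} - θ i.succ * (p * (1 - p)) := by
    rw [hErc, hEfc, hEc]
    simp_rw [hEXc]
    simp_rw [mul_ite, mul_zero]
    rw [Finset.sum_ite_eq' Finset.univ i]
    simp
    ring
  -- quadratic expansion and stationarity
  set A : ℝ := expect N p (fun x => c x ^ 2) + lam with hA
  set B : ℝ := 2 * lam * θ i.succ - 2 * expect N p (fun x => r x * c x) with hB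
  have hquad : ∀ t : ℝ, 0 ≤ A * t ^ 2 + B * t := by
    intro t
    set θt : Fin (N + 1) → ℝ :=
      fun k => θ k + t * (if k = i.succ then 1 else if k = 0 then -p else 0) with hθt
    have hmin' := hmin θt
    -- penalty identity
    have hpen : ∑ j : Fin N, (θt j.succ) ^ 2
        = (∑ j : Fin N, (θ j.succ) ^ 2) + (2 * t * θ i.succ + t ^ 2) := by
      have h1 : ∀ j : Fin N, (θt j.succ) ^ 2
          = (θ j.succ) ^ 2 + (2 * t * θ j.succ + t ^ 2) * (if j = i then 1 else 0) := by
        intro j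
        simp only [hθt]
        by_cases hji : j = i
        · subst hji
          rw [if_pos rfl, if_pos rfl]
          ring
        · rw [if_neg (fun h => hji (Fin.succ_inj.mp h)), if_neg (Fin.succ_ne_zero j),
            if_neg hji]
          ring
      rw [Finset.sum_congr rfl fun j _ => h1 j, Finset.sum_add_distrib]
      congr 1
      simp_rw [mul_ite, mul_one, mul_zero]
      rw [Finset.sum_ite_eq' Finset.univ i]
      simp
    -- residual identity
    have hres : Rres N p f θt
        = Rres N p f θ + (expect N p (fun x => c x ^ 2) * t ^ 2
            - 2 * expect N p (fun x => r x * c x) * t) := by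
      have h1 : ∀ x : Fin N → Bool,
          f x - θt 0 - ∑ j : Fin N, θt j.succ * (if x j then (1:ℝ) else 0)
            = r x - t * c x := by
        intro x
        simp only [hθt, hr, hc]
        have hsum : ∑ j : Fin N,
            (θ j.succ + t * (if j.succ = i.succ then 1 else if j.succ = 0 then -p else 0))
              * (if x j then (1:ℝ) else 0)
            = (∑ j : Fin N, θ j.succ * (if x j then (1:ℝ) else 0))
              + t * (if x i then (1:ℝ) else 0) := by
          have h2 : ∀ j : Fin N,
              (θ j.succ + t * (if j.succ = i.succ then 1 else if j.succ = 0 then -p else 0))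
                * (if x j then (1:ℝ) else 0)
              = θ j.succ * (if x j then (1:ℝ) else 0)
                + (if j = i then t * (if x j then (1:ℝ) else 0) else 0) := by
            intro j
            by_cases hji : j = i
            · subst hji
              rw [if_pos rfl, if_pos rfl]
              ring
            · rw [if_neg (fun h => hji (Fin.succ_inj.mp h)), if_neg (Fin.succ_ne_zero j),
                if_neg hji]
              ring
          rw [Finset.sum_congr rfl fun j _ => h2 j, Finset.sum_add_distrib,
            Finset.sum_ite_eq' Finset.univ i]
          simp
        have h0 : ((0 : Fin (N+1)) = i.succ) = False := by
          simp [Ne.symm (Fin.succ_ne_zero i)]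
        rw [hsum]
        simp only [h0, if_false, eq_self_iff_true, if_true]
        ring
      have h2 : Rres N p f θt = expect N p (fun x => (r x - t * c x) ^ 2) := by
        unfold Rres
        exact congrArg _ (funext fun x => by rw [h1 x])
      rw [h2]
      have h3 : (fun x => (r x - t * c x) ^ 2)
          = fun x => r x ^ 2 + (t ^ 2 * c x ^ 2 + (-(2 * t)) * (r x * c x)) := by
        funext x; ring
      rw [h3, expect_add, expect_add, expect_smul, expect_smul]
      have h4 : Rres N p f θ = expect N p (fun x => r x ^ 2) := rfl
      rw [h4]; ring
    have := hmin'
    rw [hpen, hres] at this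
    simp only [hA, hB]
    nlinarith [this]
  have hstat : B = 0 := quad_coeff_zero hquad (by simp only [hA]; linarith)
  have key : expect N p (fun x => r x * c x) = lam * θ i.succ := by
    simp only [hB] at hstat; linarith
  rw [hErc'] at key
  -- final algebra
  have hden : 0 < p * (1 - p) + lam := by linarith
  have h1 : (1 + 4 * lam / (sigma p) ^ 2) = (p * (1 - p) + lam) / (p * (1 - p)) := by
    rw [hσsq]; field_simp [(sub_pos.mpr hp1).ne']
  have hθval : θ i.succ = sigma p * coeff N p f {i} / (2 * (p * (1 - p) + lam)) := by
    rw [eq_div_iff (by positivity)]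
    linear_combination (-2) * key
  rw [hθval, h1, inv_div]
  field_simp
  linear_combination (coeff N p f {i}) * hσsq


end
end Paper
end

section
/- (Theorem 3.2) Let f : {-1,1}^N → ℝ with E_{x~B_p}[f(x)²] > 0, let ρ ∈ [0,1), and let h̄(ρ) = h(ρ) / E_{x~B_p}[f(x)²] be the normalized noise stability. Then the normalized residual of the best linear approximation satisfies (Σ_{S⊆{1,…,N}, |S|≥2} f̂(S)²) / (Σ_{S⊆{1,…,N}} f̂(S)²) ≤ (1 - h̄(ρ)) / (1 - ρ²). -/
open Finset

namespace Paper

noncomputable section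

section PerCoord

def psi (p : ℝ) (b : Bool) : ℝ := (sgn b - (2 * p - 1)) / sigma p
def w (p : ℝ) (b : Bool) : ℝ := if b then p else 1 - p

variable {p ρ : ℝ} (hp : 0 < p) (hp1 : p < 1)
include hp hp1

omit hp hp1 in
lemma L1 : ∑ b, w p b = 1 := by simp [w]

lemma L2 : ∑ b, w p b * psi p b = 0 := by
  have h0 : 0 < Real.sqrt (p * (1 - p)) := Real.sqrt_pos.2 (by nlinarith)
  have h2 : Real.sqrt (p * (1 - p)) ^ 2 = p * (1 - p) := Real.sq_sqrt (by nlinarith)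
  simp only [Fintype.sum_bool, w, psi, sgn, sigma, if_true, if_false, Bool.false_eq_true]
  generalize Real.sqrt (p * (1 - p)) = s at h0 h2 ⊢
  field_simp
  ring

lemma L3 : ∑ b, w p b * (psi p b * psi p b) = 1 := by
  have h0 : 0 < Real.sqrt (p * (1 - p)) := Real.sqrt_pos.2 (by nlinarith)
  have h2 : Real.sqrt (p * (1 - p)) ^ 2 = p * (1 - p) := Real.sq_sqrt (by nlinarith)
  simp only [Fintype.sum_bool, w, psi, sgn, sigma, if_true, if_false, Bool.false_eq_true]
  generalize Real.sqrt (p * (1 - p)) = s at h0 h2 ⊢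
  field_simp
  linear_combination (-4 : ℝ) * h2

lemma L4 (b c : Bool) : w p b * (psi p b * psi p c + 1) = if b = c then 1 else 0 := by
  have h0 : 0 < Real.sqrt (p * (1 - p)) := Real.sqrt_pos.2 (by nlinarith)
  have h2 : Real.sqrt (p * (1 - p)) ^ 2 = p * (1 - p) := Real.sq_sqrt (by nlinarith)
  simp only [w, psi, sgn, sigma]
  generalize Real.sqrt (p * (1 - p)) = s at h0 h2 ⊢
  cases b <;> cases c <;> simp only [if_true, if_false, Bool.true_eq_false,
    Bool.false_eq_true, reduceIte] <;> field_simp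
  · linear_combination (-4*p : ℝ) * h2
  · linear_combination (4 - 4*p : ℝ) * h2
  · linear_combination (4*p : ℝ) * h2
  · linear_combination (4*p - 4 : ℝ) * h2

omit hp hp1 in
lemma L5 : ∑ b, ∑ b', pairWt p ρ b b' = 1 := by
  simp [Fintype.sum_bool, pairWt]; ring

lemma L6 : ∑ b, ∑ b', pairWt p ρ b b' * psi p b = 0 := by
  have h0 : 0 < Real.sqrt (p * (1 - p)) := Real.sqrt_pos.2 (by nlinarith)
  simp only [Fintype.sum_bool, pairWt, psi, sgn, sigma, if_true, if_false, reduceIte, Bool.false_eq_true]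
  generalize Real.sqrt (p * (1 - p)) = s at h0 ⊢
  field_simp
  ring

lemma L6' : ∑ b, ∑ b', pairWt p ρ b b' * psi p b' = 0 := by
  have h0 : 0 < Real.sqrt (p * (1 - p)) := Real.sqrt_pos.2 (by nlinarith)
  simp only [Fintype.sum_bool, pairWt, psi, sgn, sigma, if_true, if_false, reduceIte, Bool.false_eq_true]
  generalize Real.sqrt (p * (1 - p)) = s at h0 ⊢
  field_simp
  ring

lemma L7 : ∑ b, ∑ b', pairWt p ρ b b' * (psi p b * psi p b') = ρ := by
  have h0 : 0 < Real.sqrt (p * (1 - p)) := Real.sqrt_pos.2 (by nlinarith)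
  have h2 : Real.sqrt (p * (1 - p)) ^ 2 = p * (1 - p) := Real.sq_sqrt (by nlinarith)
  simp only [Fintype.sum_bool, pairWt, psi, sgn, sigma, if_true, if_false, reduceIte, Bool.false_eq_true]
  generalize Real.sqrt (p * (1 - p)) = s at h0 h2 ⊢
  field_simp
  linear_combination (-4 * ρ : ℝ) * h2


end PerCoord

section Structural

variable {N : ℕ} {p ρ : ℝ}

lemma sum_prod (g : Fin N → Bool → ℝ) :
    ∑ x : Fin N → Bool, ∏ i, g i (x i) = ∏ i, ∑ b, g i b := by
  rw [Finset.prod_univ_sum, Fintype.piFinset_univ]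

lemma sum_sum_prod (g : Fin N → Bool → Bool → ℝ) :
    ∑ x : Fin N → Bool, ∑ x' : Fin N → Bool, ∏ i, g i (x i) (x' i)
      = ∏ i, ∑ b, ∑ b', g i b b' := by
  have h : ∀ x : Fin N → Bool, ∑ x' : Fin N → Bool, ∏ i, g i (x i) (x' i)
      = ∏ i, ∑ b', g i (x i) b' := fun x => sum_prod (fun i b' => g i (x i) b')
  simp_rw [h]
  exact sum_prod (fun i b => ∑ b', g i b b')

lemma phi_eq (S : Finset (Fin N)) (x : Fin N → Bool) :
    phi N p S x = ∏ i, (if i ∈ S then psi p (x i) else 1) := by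
  rw [Finset.prod_ite_mem, Finset.univ_inter]; rfl

lemma orth (hp : 0 < p) (hp1 : p < 1) (S T : Finset (Fin N)) :
    expect N p (fun x => phi N p S x * phi N p T x) = if S = T then 1 else 0 := by
  have key : ∀ x : Fin N → Bool, wt N p x * (phi N p S x * phi N p T x)
      = ∏ i, (w p (x i) * ((if i ∈ S then psi p (x i) else 1) *
          (if i ∈ T then psi p (x i) else 1))) := by
    intro x
    rw [phi_eq, phi_eq, wt, ← Finset.prod_mul_distrib, ← Finset.prod_mul_distrib]
    rfl
  rw [expect]
  simp_rw [key]
  rw [sum_prod (fun i b => w p b * ((if i ∈ S then psi p b else 1) *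
      (if i ∈ T then psi p b else 1)))]
  have hfac : ∀ i : Fin N,
      (∑ b, w p b * ((if i ∈ S then psi p b else 1) * (if i ∈ T then psi p b else 1)))
        = if (i ∈ S) = (i ∈ T) then 1 else 0 := by
    intro i
    by_cases hS : i ∈ S <;> by_cases hT : i ∈ T <;> simp [hS, hT]
    · simpa using L3 hp hp1
    · simpa using L2 hp hp1
    · simpa using L2 hp hp1
    · simpa using (L1 (p := p))
  simp_rw [hfac]
  by_cases hST : S = T
  · subst hST; simp
  · simp only [hST, if_false]
    obtain ⟨i, hi⟩ : ∃ i, ¬ ((i ∈ S) = (i ∈ T)) := by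
      by_contra h
      push_neg at h
      exact hST (Finset.ext fun i => by rw [← Finset.mem_coe, ← Finset.mem_coe]; exact iff_of_eq (h i))
    exact Finset.prod_eq_zero (Finset.mem_univ i) (by simp [hi])

lemma pairOrth (hp : 0 < p) (hp1 : p < 1) (S T : Finset (Fin N)) :
    ∑ x : Fin N → Bool, ∑ x' : Fin N → Bool,
        wtPair N p ρ x x' * (phi N p S x * phi N p T x')
      = if S = T then ρ ^ S.card else 0 := by
  have key : ∀ x x' : Fin N → Bool, wtPair N p ρ x x' * (phi N p S x * phi N p T x')
      = ∏ i, (pairWt p ρ (x i) (x' i) * ((if i ∈ S then psi p (x i) else 1) *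
          (if i ∈ T then psi p (x' i) else 1))) := by
    intro x x'
    rw [phi_eq, phi_eq, wtPair, ← Finset.prod_mul_distrib, ← Finset.prod_mul_distrib]
  simp_rw [key]
  rw [sum_sum_prod (fun i b b' => pairWt p ρ b b' * ((if i ∈ S then psi p b else 1) *
      (if i ∈ T then psi p b' else 1)))]
  have hfac : ∀ i : Fin N,
      (∑ b, ∑ b', pairWt p ρ b b' * ((if i ∈ S then psi p b else 1) *
          (if i ∈ T then psi p b' else 1)))
        = if i ∈ S then (if i ∈ T then ρ else 0) else (if i ∈ T then 0 else 1) := by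
    intro i
    by_cases hS : i ∈ S <;> by_cases hT : i ∈ T <;> simp [hS, hT]
    · simpa using L7 (ρ := ρ) hp hp1
    · simpa using L6 (ρ := ρ) hp hp1
    · simpa using L6' (ρ := ρ) hp hp1
    · simpa using (L5 (p := p) (ρ := ρ))
  simp_rw [hfac]
  by_cases hST : S = T
  · subst hST
    rw [if_pos rfl]
    calc (∏ i : Fin N, if i ∈ S then (if i ∈ S then ρ else 0) else (if i ∈ S then 0 else 1))
        = ∏ i : Fin N, (if i ∈ S then ρ else 1) := by
          apply Finset.prod_congr rfl
          intro i _
          by_cases h : i ∈ S <;> simp [h]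
      _ = ρ ^ S.card := by
          rw [Finset.prod_ite_mem, Finset.univ_inter, Finset.prod_const]
  · simp only [hST, if_false]
    obtain ⟨i, hi⟩ : ∃ i, ¬ ((i ∈ S) = (i ∈ T)) := by
      by_contra h
      push_neg at h
      exact hST (Finset.ext fun i => iff_of_eq (h i))
    refine Finset.prod_eq_zero (Finset.mem_univ i) ?_
    by_cases hS : i ∈ S <;> by_cases hT : i ∈ T <;> simp_all

lemma delta (hp : 0 < p) (hp1 : p < 1) (x y : Fin N → Bool) :
    wt N p x * ∑ S : Finset (Fin N), phi N p S x * phi N p S y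
      = if x = y then 1 else 0 := by
  have h1 : ∑ S : Finset (Fin N), phi N p S x * phi N p S y
      = ∏ i, (psi p (x i) * psi p (y i) + 1) := by
    have : ∀ S : Finset (Fin N), phi N p S x * phi N p S y
        = ∏ i ∈ S, psi p (x i) * psi p (y i) := by
      intro S; rw [phi, phi, ← Finset.prod_mul_distrib]; rfl
    simp_rw [this]
    rw [Finset.prod_add]
    simp [Finset.powerset_univ]
  rw [h1, wt, ← Finset.prod_mul_distrib]
  have : ∀ i : Fin N, (if x i then p else 1 - p) * (psi p (x i) * psi p (y i) + 1)
      = if x i = y i then 1 else 0 := fun i => L4 hp hp1 (x i) (y i)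
  simp_rw [this]
  by_cases hxy : x = y
  · subst hxy; simp
  · simp only [hxy, if_false]
    obtain ⟨i, hi⟩ : ∃ i, x i ≠ y i := by
      by_contra h; push_neg at h; exact hxy (funext h)
    exact Finset.prod_eq_zero (Finset.mem_univ i) (by simp [hi])

lemma inversion (hp : 0 < p) (hp1 : p < 1) (f : (Fin N → Bool) → ℝ) (y : Fin N → Bool) :
    ∑ S : Finset (Fin N), coeff N p f S * phi N p S y = f y := by
  simp only [coeff, expect, Finset.sum_mul]
  rw [Finset.sum_comm]
  have : ∀ x : Fin N → Bool,
      (∑ S : Finset (Fin N), wt N p x * (f x * phi N p S x) * phi N p S y)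
        = f x * (wt N p x * ∑ S : Finset (Fin N), phi N p S x * phi N p S y) := by
    intro x
    simp only [Finset.mul_sum]
    apply Finset.sum_congr rfl
    intro S _
    ring
  simp_rw [this, delta hp hp1]
  simp [Finset.sum_ite_eq']

lemma parseval (hp : 0 < p) (hp1 : p < 1) (f : (Fin N → Bool) → ℝ) :
    ∑ S : Finset (Fin N), (coeff N p f S) ^ 2 = expect N p (fun x => f x ^ 2) := by
  have : ∀ S : Finset (Fin N), (coeff N p f S) ^ 2
      = ∑ x : Fin N → Bool, wt N p x * (f x * phi N p S x) * coeff N p f S := by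
    intro S
    rw [← Finset.sum_mul, pow_two]
    rfl
  simp_rw [this]
  rw [Finset.sum_comm]
  have h2 : ∀ x : Fin N → Bool,
      (∑ S : Finset (Fin N), wt N p x * (f x * phi N p S x) * coeff N p f S)
        = wt N p x * f x ^ 2 := by
    intro x
    have : (∑ S : Finset (Fin N), wt N p x * (f x * phi N p S x) * coeff N p f S)
        = wt N p x * f x * (∑ S : Finset (Fin N), coeff N p f S * phi N p S x) := by
      simp only [Finset.mul_sum]
      apply Finset.sum_congr rfl
      intro S _
      ring
    rw [this, inversion hp hp1]
    ring
  simp_rw [h2]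
  rfl

lemma swap4 {α β : Type*} [Fintype α] [Fintype β] (F : α → α → β → β → ℝ) :
    ∑ a : α, ∑ a' : α, ∑ b : β, ∑ b' : β, F a a' b b'
      = ∑ b : β, ∑ b' : β, ∑ a : α, ∑ a' : α, F a a' b b' := by
  calc ∑ a : α, ∑ a' : α, ∑ b : β, ∑ b' : β, F a a' b b'
      = ∑ a : α, ∑ b : β, ∑ a' : α, ∑ b' : β, F a a' b b' :=
        Finset.sum_congr rfl fun a _ => Finset.sum_comm
    _ = ∑ b : β, ∑ a : α, ∑ a' : α, ∑ b' : β, F a a' b b' := Finset.sum_comm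
    _ = ∑ b : β, ∑ a : α, ∑ b' : β, ∑ a' : α, F a a' b b' :=
        Finset.sum_congr rfl fun b _ => Finset.sum_congr rfl fun a _ => Finset.sum_comm
    _ = ∑ b : β, ∑ b' : β, ∑ a : α, ∑ a' : α, F a a' b b' :=
        Finset.sum_congr rfl fun b _ => Finset.sum_comm

lemma noise_formula (hp : 0 < p) (hp1 : p < 1) (f : (Fin N → Bool) → ℝ) :
    noiseStab N p ρ f = ∑ S : Finset (Fin N), ρ ^ S.card * (coeff N p f S) ^ 2 := by
  have hrw : ∀ (x x' : Fin N → Bool), wtPair N p ρ x x' * (f x * f x')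
      = ∑ S : Finset (Fin N), ∑ T : Finset (Fin N),
          coeff N p f S * coeff N p f T *
            (wtPair N p ρ x x' * (phi N p S x * phi N p T x')) := by
    intro x x'
    conv_lhs => rw [← inversion hp hp1 f x, ← inversion hp hp1 f x']
    rw [Finset.sum_mul_sum, Finset.mul_sum]
    apply Finset.sum_congr rfl
    intro S _
    rw [Finset.mul_sum]
    apply Finset.sum_congr rfl
    intro T _
    ring
  rw [noiseStab]
  simp_rw [hrw]
  rw [swap4]
  have : ∀ S : Finset (Fin N),
      (∑ T : Finset (Fin N), ∑ x : Fin N → Bool, ∑ x' : Fin N → Bool,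
          coeff N p f S * coeff N p f T *
            (wtPair N p ρ x x' * (phi N p S x * phi N p T x')))
        = ρ ^ S.card * (coeff N p f S) ^ 2 := by
    intro S
    have h1 : ∀ T : Finset (Fin N),
        (∑ x : Fin N → Bool, ∑ x' : Fin N → Bool,
            coeff N p f S * coeff N p f T *
              (wtPair N p ρ x x' * (phi N p S x * phi N p T x')))
          = coeff N p f S * coeff N p f T * (if S = T then ρ ^ S.card else 0) := by
      intro T
      rw [← pairOrth hp hp1 S T, Finset.mul_sum]
      apply Finset.sum_congr rfl
      intro x _
      rw [Finset.mul_sum]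
    simp_rw [h1]
    simp [Finset.sum_ite_eq, pow_two]
    ring
  simp_rw [this]


end Structural

/-- Theorem 3.2: the normalized residual of the best linear approximation is bounded
by (1 - h̄(ρ))/(1 - ρ²), where h̄(ρ) = h(ρ)/E[f²]. -/
theorem stmt_10 (N : ℕ) (p : ℝ) (hp : 0 < p) (hp1 : p < 1)
    (f : (Fin N → Bool) → ℝ) (hf : 0 < expect N p (fun x => (f x) ^ 2))
    (ρ : ℝ) (hρ0 : 0 ≤ ρ) (hρ1 : ρ < 1) :
    (∑ S ∈ Finset.univ.filter (fun S : Finset (Fin N) => 2 ≤ S.card),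
        (coeff N p f S) ^ 2) / (∑ S : Finset (Fin N), (coeff N p f S) ^ 2)
      ≤ (1 - noiseStab N p ρ f / expect N p (fun x => (f x) ^ 2)) / (1 - ρ ^ 2) := by
  have hpar := parseval hp hp1 f
  have hnoise := noise_formula (ρ := ρ) hp hp1 f
  have hρ2 : 0 < 1 - ρ ^ 2 := by nlinarith
  set E := expect N p (fun x => (f x) ^ 2) with hE
  have key : (∑ S ∈ Finset.univ.filter (fun S : Finset (Fin N) => 2 ≤ S.card),
        (coeff N p f S) ^ 2) * (1 - ρ ^ 2)
      ≤ ∑ S : Finset (Fin N), (1 - ρ ^ S.card) * (coeff N p f S) ^ 2 := by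
    rw [Finset.sum_mul]
    calc ∑ S ∈ Finset.univ.filter (fun S : Finset (Fin N) => 2 ≤ S.card),
          (coeff N p f S) ^ 2 * (1 - ρ ^ 2)
        ≤ ∑ S ∈ Finset.univ.filter (fun S : Finset (Fin N) => 2 ≤ S.card),
          (1 - ρ ^ S.card) * (coeff N p f S) ^ 2 := by
          apply Finset.sum_le_sum
          intro S hS
          rw [Finset.mem_filter] at hS
          have h1 : ρ ^ S.card ≤ ρ ^ 2 := pow_le_pow_of_le_one hρ0 hρ1.le hS.2
          nlinarith [sq_nonneg (coeff N p f S)]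
      _ ≤ ∑ S : Finset (Fin N), (1 - ρ ^ S.card) * (coeff N p f S) ^ 2 := by
          apply Finset.sum_le_sum_of_subset_of_nonneg (Finset.filter_subset _ _)
          intro S _ _
          have : ρ ^ S.card ≤ 1 := pow_le_one₀ hρ0 hρ1.le
          nlinarith [sq_nonneg (coeff N p f S)]
  have hsum : ∑ S : Finset (Fin N), (1 - ρ ^ S.card) * (coeff N p f S) ^ 2
      = E - noiseStab N p ρ f := by
    rw [hnoise, ← hpar, ← Finset.sum_sub_distrib]
    apply Finset.sum_congr rfl
    intro S _
    ring
  rw [hpar, div_le_div_iff₀ hf hρ2]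
  have hEn : E ≠ 0 := ne_of_gt hf
  have hrhs : (1 - noiseStab N p ρ f / E) * E = E - noiseStab N p ρ f := by
    field_simp
  rw [hrhs]
  linarith [key, hsum.ge, hsum.le]


end
end Paper
end

section
/- (Theorem 4.1, group influence) For every f : {-1,1}^N → ℝ and every I ⊆ {1,…,N}, the average group influence of deleting I decomposes as Inf_I(f) = E_{x~B_p}[f(x) - f(x|_{I→-1})] = p Σ_{i∈I} Inf_i(f) - Σ_{I'⊆I, |I'|≥2} (-1)^{|I'|} (p/(1-p))^{|I'|/2} f̂(I'). -/
open Finset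

namespace Paper

noncomputable section

variable {N : ℕ} {p : ℝ}

def flip (a : Fin N) (x : Fin N → Bool) : Fin N → Bool := Function.update x a (! x a)

lemma flip_invol (a : Fin N) : Function.Involutive (flip a) := by
  intro x; unfold flip; simp [Function.update_idem]

lemma sum_flip (a : Fin N) (F : (Fin N → Bool) → ℝ) :
    ∑ x : Fin N → Bool, F x = ∑ x : Fin N → Bool, F (flip a x) :=
  (Fintype.sum_bijective _ (flip_invol a).bijective _ _ (fun _ => rfl)).symm

lemma wt_update (x : Fin N → Bool) (a : Fin N) (b : Bool) :
    wt N p (Function.update x a b)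
      = (if b then p else 1 - p) * ∏ i ∈ Finset.univ \ {a}, (if x i then p else 1 - p) := by
  unfold wt
  have h : ∀ i, (if Function.update x a b i then p else 1 - p)
      = Function.update (fun i => if x i then p else 1 - p) a (if b then p else 1 - p) i := by
    intro i
    rcases eq_or_ne i a with rfl | h
    · simp
    · simp [Function.update_of_ne h]
  rw [Finset.prod_congr rfl (fun i _ => h i)]
  exact Finset.prod_update_of_mem (Finset.mem_univ a) _ _

lemma wt_split (x : Fin N → Bool) (a : Fin N) :
    wt N p x = (if x a then p else 1 - p) * ∏ i ∈ Finset.univ \ {a}, (if x i then p else 1 - p) := by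
  conv_lhs => rw [show x = Function.update x a (x a) from (Function.update_eq_self a x).symm]
  rw [wt_update]

lemma update_self_of_eq {x : Fin N → Bool} {a : Fin N} {b : Bool} (h : x a = b) :
    Function.update x a b = x := by
  rw [← h]; exact Function.update_eq_self a x

lemma sum_update_bool (a : Fin N) (b : Bool) (g : (Fin N → Bool) → ℝ) :
    ∑ x : Fin N → Bool, wt N p x * g (Function.update x a b)
      = ∑ x : Fin N → Bool,
          (if x a = b then (wt N p x + wt N p (Function.update x a (! b))) * g x else 0) := by
  have step1 : ∀ x : Fin N → Bool, wt N p x * g (Function.update x a b)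
      = (if x a = b then 0 else wt N p x * g (Function.update x a b))
        + (if x a = b then wt N p x * g x else 0) := by
    intro x
    rcases eq_or_ne (x a) b with h | h
    · rw [if_pos h, if_pos h, update_self_of_eq h]; ring
    · rw [if_neg h, if_neg h]; ring
  rw [Finset.sum_congr rfl (fun x _ => step1 x), Finset.sum_add_distrib]
  have step2 : ∑ x : Fin N → Bool, (if x a = b then 0 else wt N p x * g (Function.update x a b))
      = ∑ x : Fin N → Bool, (if x a = b then wt N p (Function.update x a (! b)) * g x else 0) := by
    rw [sum_flip a]
    apply Finset.sum_congr rfl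
    intro x _
    have hfa : flip a x a = ! x a := by simp [flip]
    rcases eq_or_ne (x a) b with h | h
    · have hc : ¬ (flip a x a = b) := by rw [hfa, h]; simp
      rw [if_neg hc, if_pos h]
      have h2 : flip a x = Function.update x a (! b) := by unfold flip; rw [h]
      rw [h2, Function.update_idem, update_self_of_eq h]
    · have hb : x a = ! b := by
        rcases Bool.eq_false_or_eq_true b with rfl | rfl <;> simp_all
      have hc : flip a x a = b := by rw [hfa, hb]; simp
      rw [if_pos hc, if_neg h]
  rw [step2, ← Finset.sum_add_distrib]
  apply Finset.sum_congr rfl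
  intro x _
  rcases eq_or_ne (x a) b with h | h
  · rw [if_pos h, if_pos h, if_pos h]; ring
  · simp [h]

lemma sum_update_false (hp : 0 < p) (hp1 : p < 1) (a : Fin N) (g : (Fin N → Bool) → ℝ) :
    ∑ x : Fin N → Bool, wt N p x * g (Function.update x a false)
      = ∑ x : Fin N → Bool, wt N p x * ((if x a then 0 else (1 - p)⁻¹) * g x) := by
  rw [sum_update_bool]
  apply Finset.sum_congr rfl
  intro x _
  rcases hxa : x a with _ | _
  · simp only [hxa, if_pos rfl, Bool.not_false, if_neg (by simp : ¬(false = true)), ↓reduceIte]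
    rw [wt_split x a, wt_update, hxa]
    simp only [if_neg (by simp : ¬(false = true)), if_pos rfl, ↓reduceIte]
    have h1 : (1:ℝ) - p ≠ 0 := by linarith
    field_simp
    ring
  · simp [hxa]

lemma sum_update_true (hp : 0 < p) (hp1 : p < 1) (a : Fin N) (g : (Fin N → Bool) → ℝ) :
    ∑ x : Fin N → Bool, wt N p x * g (Function.update x a true)
      = ∑ x : Fin N → Bool, wt N p x * ((if x a then p⁻¹ else 0) * g x) := by
  rw [sum_update_bool]
  apply Finset.sum_congr rfl
  intro x _
  rcases hxa : x a with _ | _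
  · simp [hxa]
  · simp only [hxa, if_pos rfl, Bool.not_true, ↓reduceIte]
    rw [wt_split x a, wt_update, hxa]
    simp only [if_pos rfl, if_neg (by simp : ¬(false = true)), ↓reduceIte]
    have h1 : p ≠ 0 := ne_of_gt hp
    field_simp
    ring

lemma setNeg_insert (a : Fin N) (I : Finset (Fin N)) (x : Fin N → Bool) :
    setNeg N (insert a I) x = Function.update (setNeg N I x) a false := by
  funext j
  rcases eq_or_ne j a with rfl | h
  · simp [setNeg]
  · simp [setNeg, Function.update_of_ne h, Finset.mem_insert, h]

lemma lemB (hp : 0 < p) (hp1 : p < 1) (I : Finset (Fin N)) :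
    ∀ g : (Fin N → Bool) → ℝ,
    ∑ x : Fin N → Bool, wt N p x * g (setNeg N I x)
      = ∑ x : Fin N → Bool, wt N p x * ((∏ i ∈ I, (if x i then (0:ℝ) else (1 - p)⁻¹)) * g x) := by
  induction I using Finset.induction_on with
  | empty =>
    intro g
    have h : ∀ x : Fin N → Bool, setNeg N (∅ : Finset (Fin N)) x = x := by
      intro x; funext j; simp [setNeg]
    simp [h]
  | insert a I ha ih =>
    intro g
    have h1 : ∑ x : Fin N → Bool, wt N p x * g (setNeg N (insert a I) x)
        = ∑ x : Fin N → Bool, wt N p x * g (Function.update (setNeg N I x) a false) :=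
      Finset.sum_congr rfl (fun x _ => by rw [setNeg_insert])
    have h2 : ∑ x : Fin N → Bool, wt N p x * g (Function.update (setNeg N I x) a false)
        = ∑ x : Fin N → Bool, wt N p x
            * ((∏ i ∈ I, (if x i then (0:ℝ) else (1 - p)⁻¹)) * g (Function.update x a false)) :=
      ih (fun y => g (Function.update y a false))
    have h3 : ∑ x : Fin N → Bool, wt N p x
            * ((∏ i ∈ I, (if x i then (0:ℝ) else (1 - p)⁻¹)) * g (Function.update x a false))
        = ∑ x : Fin N → Bool, wt N p x
            * ((∏ i ∈ I, (if (Function.update x a false) i then (0:ℝ) else (1 - p)⁻¹))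
                * g (Function.update x a false)) := by
      apply Finset.sum_congr rfl
      intro x _
      congr 2
      apply Finset.prod_congr rfl
      intro i hi
      have hne : i ≠ a := fun h => ha (h ▸ hi)
      rw [Function.update_of_ne hne]
    have h4 : ∑ x : Fin N → Bool, wt N p x
            * ((∏ i ∈ I, (if (Function.update x a false) i then (0:ℝ) else (1 - p)⁻¹))
                * g (Function.update x a false))
        = ∑ x : Fin N → Bool, wt N p x
            * ((if x a then (0:ℝ) else (1 - p)⁻¹)
                * ((∏ i ∈ I, (if x i then (0:ℝ) else (1 - p)⁻¹)) * g x)) :=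
      sum_update_false hp hp1 a
        (fun y => (∏ i ∈ I, (if y i then (0:ℝ) else (1 - p)⁻¹)) * g y)
    rw [h1, h2, h3, h4]
    apply Finset.sum_congr rfl
    intro x _
    rw [Finset.prod_insert ha]
    ring

lemma sqrt_ratio_pow (a : ℝ) (ha : 0 ≤ a) (n : ℕ) : a ^ ((n:ℝ)/2) = (Real.sqrt a)^n := by
  rw [Real.sqrt_eq_rpow, ← Real.rpow_natCast (a ^ ((1:ℝ)/2)) n, ← Real.rpow_mul ha]
  ring_nf

lemma factor_eq (hp : 0 < p) (hp1 : p < 1) (b : Bool) :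
    (-Real.sqrt (p/(1-p))) * ((sgn b - (2*p-1))/sigma p) + 1
      = if b then (0:ℝ) else (1-p)⁻¹ := by
  have h1p : (0:ℝ) < 1 - p := by linarith
  have hs1 : (0:ℝ) < Real.sqrt p := Real.sqrt_pos.2 hp
  have hs2 : (0:ℝ) < Real.sqrt (1-p) := Real.sqrt_pos.2 h1p
  have e1 : Real.sqrt (p/(1-p)) = Real.sqrt p / Real.sqrt (1-p) := Real.sqrt_div hp.le _
  have e2 : sigma p = 2 * (Real.sqrt p * Real.sqrt (1-p)) := by
    unfold sigma; rw [Real.sqrt_mul hp.le]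
  have q1 : Real.sqrt p ^ 2 = p := Real.sq_sqrt hp.le
  have q2 : Real.sqrt (1-p) ^ 2 = 1 - p := Real.sq_sqrt h1p.le
  cases b
  · simp only [sgn, if_neg (by simp : ¬(false = true)), Bool.false_eq_true, if_false]
    rw [e1, e2]
    field_simp
    linear_combination (-(2*p)) * q2
  · simp only [sgn, if_pos rfl, if_pos rfl, ↓reduceIte]
    rw [e1, e2]
    field_simp
    nlinarith [q1, q2]

lemma phi_single_eq (hp : 0 < p) (hp1 : p < 1) (b : Bool) :
    Real.sqrt (p/(1-p)) * ((sgn b - (2*p-1))/sigma p)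
      = p * ((if b then p⁻¹ else 0) - (if b then (0:ℝ) else (1-p)⁻¹)) := by
  have h1p : (0:ℝ) < 1 - p := by linarith
  have hs1 : (0:ℝ) < Real.sqrt p := Real.sqrt_pos.2 hp
  have hs2 : (0:ℝ) < Real.sqrt (1-p) := Real.sqrt_pos.2 h1p
  have e1 : Real.sqrt (p/(1-p)) = Real.sqrt p / Real.sqrt (1-p) := Real.sqrt_div hp.le _
  have e2 : sigma p = 2 * (Real.sqrt p * Real.sqrt (1-p)) := by
    unfold sigma; rw [Real.sqrt_mul hp.le]
  have q1 : Real.sqrt p ^ 2 = p := Real.sq_sqrt hp.le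
  have q2 : Real.sqrt (1-p) ^ 2 = 1 - p := Real.sq_sqrt h1p.le
  cases b
  · simp only [sgn, Bool.false_eq_true, if_false]
    rw [e1, e2]
    field_simp
    linear_combination (2*p) * q2
  · simp only [sgn, if_pos rfl, ↓reduceIte]
    rw [e1, e2]
    field_simp
    nlinarith [q1, q2]


lemma lemA (hp : 0 < p) (hp1 : p < 1) (I : Finset (Fin N)) (x : Fin N → Bool) :
    ∑ S ∈ I.powerset, ((-1:ℝ)^S.card * (p/(1-p))^((S.card:ℝ)/2)) * phi N p S x
      = ∏ i ∈ I, (if x i then (0:ℝ) else (1-p)⁻¹) := by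
  have h1p : (0:ℝ) < 1 - p := by linarith
  have hq : (0:ℝ) ≤ p / (1-p) := div_nonneg hp.le h1p.le
  have e1 : ∀ S ∈ I.powerset,
      ((-1:ℝ)^S.card * (p/(1-p))^((S.card:ℝ)/2)) * phi N p S x
        = ∏ i ∈ S, ((-Real.sqrt (p/(1-p))) * ((sgn (x i) - (2*p-1))/sigma p)) := by
    intro S _
    rw [Finset.prod_mul_distrib, Finset.prod_const, sqrt_ratio_pow _ hq, phi]
    ring
  rw [Finset.sum_congr rfl e1]
  have e2 := Finset.prod_add
    (fun i => (-Real.sqrt (p/(1-p))) * ((sgn (x i) - (2*p-1))/sigma p))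
    (fun _ => (1:ℝ)) I
  simp only [Finset.prod_const_one, mul_one] at e2
  rw [← e2]
  exact Finset.prod_congr rfl (fun i _ => factor_eq hp hp1 (x i))

lemma infl_eq (hp : 0 < p) (hp1 : p < 1) (f : (Fin N → Bool) → ℝ) (i : Fin N) :
    infl N p f i = ∑ x : Fin N → Bool,
      wt N p x * (((if x i then p⁻¹ else 0) - (if x i then (0:ℝ) else (1-p)⁻¹)) * f x) := by
  unfold infl expect
  have e1 : ∀ x : Fin N → Bool,
      wt N p x * (f (Function.update x i true) - f (Function.update x i false))
      = wt N p x * f (Function.update x i true) - wt N p x * f (Function.update x i false) := by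
    intro x; ring
  rw [Finset.sum_congr rfl (fun x _ => e1 x), Finset.sum_sub_distrib]
  have h1 : ∑ x : Fin N → Bool, wt N p x * f (Function.update x i true)
      = ∑ x : Fin N → Bool, wt N p x * ((if x i then p⁻¹ else 0) * f x) :=
    sum_update_true hp hp1 i f
  have h2 : ∑ x : Fin N → Bool, wt N p x * f (Function.update x i false)
      = ∑ x : Fin N → Bool, wt N p x * ((if x i then (0:ℝ) else (1-p)⁻¹) * f x) :=
    sum_update_false hp hp1 i f
  rw [h1, h2, ← Finset.sum_sub_distrib]
  exact Finset.sum_congr rfl (fun x _ => by ring)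

lemma lemE (hp : 0 < p) (hp1 : p < 1) (f : (Fin N → Bool) → ℝ) (i : Fin N) :
    Real.sqrt (p/(1-p)) * coeff N p f {i} = p * infl N p f i := by
  rw [infl_eq hp hp1, Finset.mul_sum]
  unfold coeff expect
  rw [Finset.mul_sum]
  apply Finset.sum_congr rfl
  intro x _
  have := phi_single_eq hp hp1 (x i)
  simp only [phi, Finset.prod_singleton]
  calc Real.sqrt (p/(1-p)) * (wt N p x * (f x * ((sgn (x i) - (2*p-1)) / sigma p)))
      = wt N p x * (f x * (Real.sqrt (p/(1-p)) * ((sgn (x i) - (2*p-1)) / sigma p))) := by ring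
    _ = wt N p x * (f x * (p * ((if x i then p⁻¹ else 0) - (if x i then (0:ℝ) else (1-p)⁻¹)))) := by
        rw [this]
    _ = p * (wt N p x * (((if x i then p⁻¹ else 0) - (if x i then (0:ℝ) else (1-p)⁻¹)) * f x)) := by
        ring

lemma lemM1 (hp : 0 < p) (hp1 : p < 1) (f : (Fin N → Bool) → ℝ) (I : Finset (Fin N)) :
    ∑ x : Fin N → Bool, wt N p x * f (setNeg N I x)
      = ∑ S ∈ I.powerset, ((-1:ℝ)^S.card * (p/(1-p))^((S.card:ℝ)/2)) * coeff N p f S := by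
  rw [lemB hp hp1 I f]
  have e1 : ∀ x : Fin N → Bool,
      wt N p x * ((∏ i ∈ I, (if x i then (0:ℝ) else (1-p)⁻¹)) * f x)
      = ∑ S ∈ I.powerset,
          ((-1:ℝ)^S.card * (p/(1-p))^((S.card:ℝ)/2)) * (wt N p x * (f x * phi N p S x)) := by
    intro x
    rw [← lemA hp hp1 I x, Finset.sum_mul, Finset.mul_sum]
    apply Finset.sum_congr rfl
    intro S _
    ring
  rw [Finset.sum_congr rfl (fun x _ => e1 x), Finset.sum_comm]
  apply Finset.sum_congr rfl
  intro S _
  rw [coeff, expect, Finset.mul_sum]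

/-- Theorem 4.1 (group influence): Inf_I(f) = p Σ_{i∈I} Inf_i(f)
- Σ_{I'⊆I, |I'|≥2} (-1)^{|I'|} (p/(1-p))^{|I'|/2} f̂(I'). -/
theorem stmt_14 (N : ℕ) (p : ℝ) (hp : 0 < p) (hp1 : p < 1)
    (f : (Fin N → Bool) → ℝ) (I : Finset (Fin N)) :
    inflSet N p f I
      = p * ∑ i ∈ I, infl N p f i
        - ∑ I' ∈ I.powerset.filter (fun I' => 2 ≤ I'.card),
            (-1 : ℝ) ^ I'.card * (p / (1 - p)) ^ ((I'.card : ℝ) / 2) * coeff N p f I' := by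
  have h1p : (0:ℝ) < 1 - p := by linarith
  have hq : (0:ℝ) ≤ p / (1-p) := div_nonneg hp.le h1p.le
  have hM1 := lemM1 hp hp1 f I
  -- split the powerset sum
  have hsplit := Finset.sum_filter_add_sum_filter_not I.powerset (fun S => 2 ≤ S.card)
    (fun S => ((-1:ℝ)^S.card * (p/(1-p))^((S.card:ℝ)/2)) * coeff N p f S)
  have hfilter : I.powerset.filter (fun S => ¬ 2 ≤ S.card)
      = insert (∅ : Finset (Fin N)) (I.image (fun i => {i})) := by
    ext S
    simp only [Finset.mem_filter, Finset.mem_powerset, Finset.mem_insert, Finset.mem_image]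
    constructor
    · rintro ⟨hsub, hcard⟩
      have hc1 : S.card ≤ 1 := by omega
      rcases Finset.eq_empty_or_nonempty S with rfl | ⟨a, haS⟩
      · exact Or.inl rfl
      · have hSa : S = {a} := Finset.eq_singleton_iff_unique_mem.2
          ⟨haS, fun b hb => Finset.card_le_one.1 hc1 b hb a haS⟩
        subst hSa
        exact Or.inr ⟨a, hsub (Finset.mem_singleton_self a), rfl⟩
    · rintro (rfl | ⟨a, haI, rfl⟩)
      · simp
      · refine ⟨Finset.singleton_subset_iff.2 haI, by simp⟩
  have hnotmem : (∅ : Finset (Fin N)) ∉ I.image (fun i => ({i} : Finset (Fin N))) := by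
    simp only [Finset.mem_image, not_exists]
    intro a
    rintro ⟨_, h⟩
    exact (Finset.singleton_ne_empty a) h
  have hempty : ((-1:ℝ)^(∅ : Finset (Fin N)).card * (p/(1-p))^(((∅ : Finset (Fin N)).card:ℝ)/2)) * coeff N p f ∅
      = expect N p f := by
    simp only [Finset.card_empty, pow_zero, Nat.cast_zero, zero_div, Real.rpow_zero, one_mul,
      coeff, expect, phi, Finset.prod_empty, mul_one]
  have hsingle : ∀ a ∈ I,
      ((-1:ℝ)^({a} : Finset (Fin N)).card * (p/(1-p))^((({a} : Finset (Fin N)).card:ℝ)/2)) * coeff N p f {a}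
      = -(p * infl N p f a) := by
    intro a _
    rw [Finset.card_singleton, pow_one, ← lemE hp hp1 f a, sqrt_ratio_pow _ hq 1, pow_one]
    ring
  have himg : ∑ S ∈ I.image (fun i => ({i} : Finset (Fin N))),
        ((-1:ℝ)^S.card * (p/(1-p))^((S.card:ℝ)/2)) * coeff N p f S
      = ∑ a ∈ I, -(p * infl N p f a) := by
    rw [Finset.sum_image (fun i _ j _ h => Finset.singleton_injective h)]
    exact Finset.sum_congr rfl hsingle
  have hlow : ∑ S ∈ I.powerset.filter (fun S => ¬ 2 ≤ S.card),
        ((-1:ℝ)^S.card * (p/(1-p))^((S.card:ℝ)/2)) * coeff N p f S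
      = expect N p f - p * ∑ i ∈ I, infl N p f i := by
    rw [hfilter, Finset.sum_insert hnotmem, himg, hempty]
    have hneg : ∑ a ∈ I, -(p * infl N p f a) = -(∑ a ∈ I, p * infl N p f a) := by simp
    rw [hneg, Finset.mul_sum]
    ring
  have hIS : inflSet N p f I = expect N p f - ∑ x : Fin N → Bool, wt N p x * f (setNeg N I x) := by
    unfold inflSet expect
    rw [← Finset.sum_sub_distrib]
    exact Finset.sum_congr rfl (fun x _ => by ring)
  rw [hIS, hM1, ← hsplit, hlow]
  ring
end
end Paper
end

section
/- (Lemma A.2) For every f : {-1,1}^N → ℝ and every I ⊆ {1,…,N}, the residual term in the group influence decomposition is bounded by |Σ_{I'⊆I, |I'|≥2} (-1)^{|I'|} (p/(1-p))^{|I'|/2} f̂(I')| ≤ (1-p)^{-|I|/2} √(B_{≥2}), where B_{≥2} = Σ_{S⊆{1,…,N}, |S|≥2} f̂(S)². -/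
open Finset

namespace Paper

noncomputable section

/-- Lemma A.2: the residual term in the group influence decomposition is bounded by
(1-p)^{-|I|/2} √(B_{≥2}). -/
theorem stmt_16 (N : ℕ) (p : ℝ) (hp : 0 < p) (hp1 : p < 1)
    (f : (Fin N → Bool) → ℝ) (I : Finset (Fin N)) :
    |∑ I' ∈ I.powerset.filter (fun I' => 2 ≤ I'.card),
        (-1 : ℝ) ^ I'.card * (p / (1 - p)) ^ ((I'.card : ℝ) / 2) * coeff N p f I'|
      ≤ (1 - p) ^ (-(I.card : ℝ) / 2) *
          Real.sqrt (∑ S ∈ Finset.univ.filter (fun S : Finset (Fin N) => 2 ≤ S.card),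
            (coeff N p f S) ^ 2) := by

  have h1p : 0 < 1 - p := by linarith
  set r := p / (1 - p) with hr
  have hr0 : 0 ≤ r := div_nonneg hp.le h1p.le
  set s := I.powerset.filter (fun I' => 2 ≤ I'.card) with hs
  set a : Finset (Fin N) → ℝ :=
    fun I' => (-1 : ℝ) ^ I'.card * r ^ ((I'.card : ℝ) / 2) with ha
  set c : Finset (Fin N) → ℝ := fun S => coeff N p f S with hc
  have hCS : (∑ I' ∈ s, a I' * c I') ^ 2 ≤ (∑ I' ∈ s, a I' ^ 2) * ∑ I' ∈ s, c I' ^ 2 :=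
    Finset.sum_mul_sq_le_sq_mul_sq s a c
  have ha2 : ∀ I' : Finset (Fin N), a I' ^ 2 = r ^ I'.card := by
    intro I'
    have h1 : ((-1 : ℝ) ^ I'.card) ^ 2 = 1 := by
      rw [← pow_mul, mul_comm, pow_mul]; norm_num
    have h2 : (r ^ ((I'.card : ℝ) / 2)) ^ 2 = r ^ I'.card := by
      rw [← Real.rpow_natCast (r ^ ((I'.card : ℝ) / 2)) 2, ← Real.rpow_mul hr0]
      push_cast
      rw [div_mul_cancel₀ _ (two_ne_zero), Real.rpow_natCast]
    simp only [ha, mul_pow, h1, h2, one_mul]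
  have hsumA : (∑ I' ∈ s, a I' ^ 2) ≤ ((1 - p) ^ (-(I.card : ℝ) / 2)) ^ 2 := by
    have hsub : (∑ I' ∈ s, a I' ^ 2) ≤ ∑ I' ∈ I.powerset, r ^ I'.card := by
      simp only [ha2]
      exact Finset.sum_le_sum_of_subset_of_nonneg (Finset.filter_subset _ _)
        (fun i _ _ => pow_nonneg hr0 _)
    have hpow : ∑ I' ∈ I.powerset, r ^ I'.card = (r + 1) ^ I.card := by
      have := Finset.prod_add (fun _ : Fin N => r) (fun _ : Fin N => (1:ℝ)) I
      simp only [Finset.prod_const, Finset.prod_const_one, mul_one, one_pow] at this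
      exact this.symm
    have hval : (r + 1) ^ I.card = ((1 - p) ^ (-(I.card : ℝ) / 2)) ^ 2 := by
      have h1 : r + 1 = (1 - p)⁻¹ := by
        field_simp [hr]
        rw [hr, div_add_one h1p.ne', div_mul_cancel₀ _ h1p.ne']; ring
      rw [h1, ← Real.rpow_natCast ((1 - p) ^ (-(I.card : ℝ) / 2)) 2,
        ← Real.rpow_mul h1p.le]
      push_cast
      rw [div_mul_cancel₀ _ (two_ne_zero : (2:ℝ) ≠ 0)]
      rw [Real.rpow_neg h1p.le, Real.rpow_natCast, inv_pow]
    rw [hpow, hval] at hsub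
    exact hsub
  have hsumC : (∑ I' ∈ s, c I' ^ 2) ≤
      ∑ S ∈ Finset.univ.filter (fun S : Finset (Fin N) => 2 ≤ S.card), c S ^ 2 := by
    apply Finset.sum_le_sum_of_subset_of_nonneg
    · intro x hx
      simp only [hs, Finset.mem_filter, Finset.mem_powerset] at hx
      simp [hx.2]
    · intro i _ _; positivity
  have hA0 : (0:ℝ) ≤ (1 - p) ^ (-(I.card : ℝ) / 2) := Real.rpow_nonneg h1p.le _
  have key : |∑ I' ∈ s, a I' * c I'| ≤
      (1 - p) ^ (-(I.card : ℝ) / 2) *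
        Real.sqrt (∑ S ∈ Finset.univ.filter (fun S : Finset (Fin N) => 2 ≤ S.card), c S ^ 2) := by
    have h1 : |∑ I' ∈ s, a I' * c I'| =
        Real.sqrt ((∑ I' ∈ s, a I' * c I') ^ 2) := (Real.sqrt_sq_eq_abs _).symm
    rw [h1]
    calc Real.sqrt ((∑ I' ∈ s, a I' * c I') ^ 2)
        ≤ Real.sqrt ((∑ I' ∈ s, a I' ^ 2) * ∑ I' ∈ s, c I' ^ 2) :=
          Real.sqrt_le_sqrt hCS
      _ = Real.sqrt (∑ I' ∈ s, a I' ^ 2) * Real.sqrt (∑ I' ∈ s, c I' ^ 2) :=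
          Real.sqrt_mul (Finset.sum_nonneg fun i _ => sq_nonneg _) _
      _ ≤ (1 - p) ^ (-(I.card : ℝ) / 2) *
          Real.sqrt (∑ S ∈ Finset.univ.filter (fun S : Finset (Fin N) => 2 ≤ S.card), c S ^ 2) := by
          apply mul_le_mul
          · rw [show (1 - p) ^ (-(I.card : ℝ) / 2) =
              Real.sqrt (((1 - p) ^ (-(I.card : ℝ) / 2)) ^ 2) by
                rw [Real.sqrt_sq hA0]]
            exact Real.sqrt_le_sqrt hsumA
          · exact Real.sqrt_le_sqrt hsumC
          · exact Real.sqrt_nonneg _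
          · exact hA0
  exact key


end
end Paper
end
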